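/- For every real y > 0, Σ_{n=1}^∞ 1/((2n-1)² + y²) = (π/(4y))·tanh(πy/2). -/

import Mathlib

open Real MeasureTheory intervalIntegral

noncomputable section

private lemma integral_exp_affine {c : ℂ} (hc : c ≠ 0) (d : ℂ) :
    ∫ x in (0:ℝ)..(0+1), Complex.exp (c * x + d) =
      (Complex.exp (c + d) - Complex.exp d) / c := by
  have h : ∀ x : ℝ, Complex.exp (c * x + d) = Complex.exp d * Complex.exp (c * x) := by
    intro x; rw [← Complex.exp_add]; ring_nf
  simp_rw [h]
  rw [intervalIntegral.integral_const_mul, integral_exp_mul_complex hc]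
  norm_num [Complex.exp_add]
  field_simp

private lemma coeff_eq (y : ℝ) (hy : 0 < y) (n : ℤ) :
    fourierCoeffOn (lt_add_of_pos_right (0:ℝ) one_pos)
        (fun x : ℝ => Complex.cosh (2*π*y*x - π*y)) n =
      ((y * Real.sinh (π*y) / π : ℝ) : ℂ) / ((y:ℂ)^2 + (n:ℂ)^2) := by
  set cp : ℂ := (2*π*y : ℝ) - (2*π*n : ℝ) * Complex.I with hcp
  set cm : ℂ := -(2*π*y : ℝ) - (2*π*n : ℝ) * Complex.I with hcm
  have hπ : (π:ℝ) ≠ 0 := Real.pi_ne_zero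
  have hcp0 : cp ≠ 0 := fun h => by
    have h2 := congrArg Complex.re h
    simp [hcp] at h2
    exact hy.ne' (by simpa [hπ] using h2)
  have hcm0 : cm ≠ 0 := fun h => by
    have h2 := congrArg Complex.re h
    simp [hcm] at h2
    exact hy.ne' (by simpa [hπ] using h2)
  have hyn : ((y:ℂ)^2 + (n:ℂ)^2) ≠ 0 := by
    have : ((y^2 + (n:ℝ)^2 : ℝ) : ℂ) ≠ 0 := by
      rw [Complex.ofReal_ne_zero]; positivity
    push_cast at this ⊢; exact this
  rw [fourierCoeffOn_eq_integral]
  have hint : ∀ x : ℝ, (fourier (-n) ((x : ℝ) : AddCircle ((0:ℝ)+1-0))) •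
        Complex.cosh (2*π*y*x - π*y)
      = (1/2) * (Complex.exp (cp * x + (-(π*y))) + Complex.exp (cm * x + (π*y))) := by
    intro x
    rw [fourier_coe_apply, Complex.cosh, smul_eq_mul]
    rw [show ∀ A B C : ℂ, A * ((B + C)/2) = (A*B + A*C) * (1/2) by intros; ring]
    rw [← Complex.exp_add, ← Complex.exp_add, hcp, hcm]
    push_cast
    norm_num
    ring_nf
  simp_rw [hint]
  have i1 : IntervalIntegrable (fun x : ℝ => Complex.exp (cp * x + (-(π*y))))
      volume 0 (0+1) := (Continuous.intervalIntegrable (by fun_prop) _ _)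
  have i2 : IntervalIntegrable (fun x : ℝ => Complex.exp (cm * x + (π*y)))
      volume 0 (0+1) := (Continuous.intervalIntegrable (by fun_prop) _ _)
  rw [intervalIntegral.integral_const_mul, intervalIntegral.integral_add i1 i2,
    integral_exp_affine hcp0, integral_exp_affine hcm0]
  have e1 : Complex.exp (cp + -(π*y)) = Complex.exp (π*y) := by
    rw [hcp, show ((2*π*y:ℝ):ℂ) - ((2*π*n:ℝ):ℂ)*Complex.I + -((π:ℂ)*(y:ℂ))
        = (π*y) + ((-n : ℤ):ℂ)*(2*π*Complex.I) by push_cast; ring,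
      Complex.exp_add, Complex.exp_int_mul_two_pi_mul_I, mul_one]
  have e2 : Complex.exp (cm + (π*y)) = Complex.exp (-(π*y)) := by
    rw [hcm, show -((2*π*y:ℝ):ℂ) - ((2*π*n:ℝ):ℂ)*Complex.I + ((π:ℂ)*(y:ℂ))
        = -(π*y) + ((-n : ℤ):ℂ)*(2*π*Complex.I) by push_cast; ring,
      Complex.exp_add, Complex.exp_int_mul_two_pi_mul_I, mul_one]
  rw [e1, e2]
  have hs : Complex.sinh ((π:ℂ)*(y:ℂ)) = (Complex.exp (π*y) - Complex.exp (-(π*y)))/2 := by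
    rw [Complex.sinh]
  norm_num
  rw [hs]
  have hπc : (π:ℂ) ≠ 0 := Complex.ofReal_ne_zero.mpr hπ
  field_simp [hcp0, hcm0, hyn]
  rw [hcp, hcm]
  push_cast
  ring_nf
  simp only [Complex.I_sq]
  ring_nf

private def oddNat (m : ℕ+) : ℕ := 2*(m:ℕ) - 1

private lemma oddNat_inj : Function.Injective oddNat := by
  intro a b hab
  have ha := a.pos; have hb := b.pos
  unfold oddNat at hab
  rw [← PNat.coe_inj]
  omega

private lemma odd_oddNat (m : ℕ+) : Odd (oddNat m) := by
  refine ⟨(m:ℕ) - 1, ?_⟩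
  have := m.pos
  unfold oddNat
  omega

private lemma oddNat_cast (m : ℕ+) : ((oddNat m : ℕ):ℝ) = 2*(m:ℝ) - 1 := by
  have h1le : (1:ℕ) ≤ 2*(m:ℕ) := by have := m.pos; omega
  unfold oddNat
  push_cast [Nat.cast_sub h1le]
  ring

private lemma summable_nat_aux (y : ℝ) (hy : 0 < y) :
    Summable (fun n : ℕ => 1 / (y^2 + (n:ℝ)^2)) := by
  rw [← summable_nat_add_iff 1]
  refine Summable.of_nonneg_of_le (fun n => by positivity) (fun n => ?_)
    ((summable_nat_add_iff 1).mpr (summable_one_div_nat_pow.mpr one_lt_two))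
  apply one_div_le_one_div_of_le (by positivity)
  nlinarith [sq_nonneg y]

private lemma summable_int_aux (y : ℝ) (hy : 0 < y) :
    Summable (fun n : ℤ => ((y * Real.sinh (π*y) / π : ℝ):ℂ) / ((y:ℂ)^2 + (n:ℂ)^2)) := by
  have h : ∀ n : ℤ, ((y * Real.sinh (π*y) / π : ℝ):ℂ) / ((y:ℂ)^2 + (n:ℂ)^2)
      = (((y * Real.sinh (π*y)/π) * (1/(y^2 + (n:ℝ)^2)) : ℝ):ℂ) := by
    intro n; push_cast; ring
  simp_rw [h]
  rw [Complex.summable_ofReal]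
  apply Summable.mul_left
  apply Summable.of_nat_of_neg
  · exact_mod_cast summable_nat_aux y hy
  · have := summable_nat_aux y hy
    apply this.congr
    intro n; push_cast; ring_nf

theorem sum_inv_odd_sq_add_sq (y : ℝ) (hy : 0 < y) :
    ∑' n : ℕ+, 1 / ((2 * (n : ℝ) - 1) ^ 2 + y ^ 2) =
      (π / (4 * y)) * Real.tanh (π * y / 2) := by
  haveI : Fact (0 < (1:ℝ)) := ⟨one_pos⟩
  set K : ℝ := y * Real.sinh (π*y) / π with hK
  set f : ℝ → ℂ := fun x : ℝ => Complex.cosh (2*π*y*x - π*y) with hf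
  have hfcont : Continuous f := by
    apply Complex.continuous_cosh.comp
    fun_prop
  have hglue : f 0 = f 1 := by
    simp only [hf, Complex.ofReal_zero, Complex.ofReal_one]
    rw [show 2*(π:ℂ)*y*0 - π*y = -(π*y) by ring, Complex.cosh_neg,
      show 2*(π:ℂ)*y*1 - π*y = π*y by ring]
  have hcont : Continuous (AddCircle.liftIco 1 0 f) :=
    AddCircle.liftIco_zero_continuous hglue hfcont.continuousOn
  set F : C(AddCircle (1:ℝ), ℂ) := ⟨AddCircle.liftIco 1 0 f, hcont⟩ with hF
  have hFc : ∀ n : ℤ, fourierCoeff (F : AddCircle (1:ℝ) → ℂ) n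
      = ((K:ℝ):ℂ) / ((y:ℂ)^2 + (n:ℂ)^2) := by
    intro n
    rw [hF, ContinuousMap.coe_mk, fourierCoeff_liftIco_eq]
    exact coeff_eq y hy n
  have hsummable : Summable (fourierCoeff (F : AddCircle (1:ℝ) → ℂ)) :=
    (summable_int_aux y hy).congr (fun n => (hFc n).symm)
  have h0 := has_pointwise_sum_fourier_series_of_summable hsummable (((0:ℝ)) : AddCircle (1:ℝ))
  have h2 := has_pointwise_sum_fourier_series_of_summable hsummable (((1/2:ℝ)) : AddCircle (1:ℝ))
  have hF0 : (F : AddCircle (1:ℝ) → ℂ) (((0:ℝ)) : AddCircle (1:ℝ)) = ((Real.cosh (π*y) : ℝ) : ℂ) := by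
    rw [hF, ContinuousMap.coe_mk,
      AddCircle.liftIco_coe_apply (by norm_num : (0:ℝ) ∈ Set.Ico (0:ℝ) (0+1))]
    simp only [hf]
    rw [show 2*(π:ℂ)*y*((0:ℝ):ℂ) - π*y = -(π*y) by push_cast; ring, Complex.cosh_neg,
      Complex.ofReal_cosh]
    push_cast
    rfl
  have hF2 : (F : AddCircle (1:ℝ) → ℂ) (((1/2:ℝ)) : AddCircle (1:ℝ)) = 1 := by
    rw [hF, ContinuousMap.coe_mk,
      AddCircle.liftIco_coe_apply (by norm_num : (1/2:ℝ) ∈ Set.Ico (0:ℝ) (0+1))]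
    simp only [hf]
    rw [show 2*(π:ℂ)*y*((1/2:ℝ):ℂ) - π*y = 0 by push_cast; ring, Complex.cosh_zero]
  have hfour2 : ∀ n : ℤ, fourier n (((1/2:ℝ)) : AddCircle (1:ℝ)) = (-1:ℂ)^n := by
    intro n
    rw [fourier_coe_apply]
    rw [show 2*(π:ℂ)*Complex.I*n*((1/2:ℝ):ℂ)/((1:ℝ):ℂ) = n*(π*Complex.I) by push_cast; ring]
    rw [Complex.exp_int_mul, Complex.exp_pi_mul_I]
  rw [hF0] at h0
  rw [hF2] at h2
  simp only [hFc, QuotientAddGroup.mk_zero, fourier_eval_zero, smul_eq_mul, mul_one] at h0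
  simp only [hFc, hfour2, smul_eq_mul] at h2
  have C := h0.sub h2
  have D := C.nat_add_neg
  have D' : HasSum (fun n : ℕ => (K:ℂ) / ((y:ℂ)^2 + (n:ℂ)^2) * (2 - 2*(-1:ℂ)^(n:ℕ)))
      (((Real.cosh (π*y) : ℝ):ℂ) - 1) := by
    convert D using 1
    · rfl
    · funext n
      have h1 : ((-1:ℂ))^(-(n:ℤ)) = (-1:ℂ)^(n:ℕ) := by
        rw [zpow_neg, zpow_natCast]
        rcases Nat.even_or_odd n with h | h
        · rw [h.neg_one_pow]; norm_num
        · rw [h.neg_one_pow]; norm_num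
      have h2 : ((-1:ℂ))^((n:ℤ)) = (-1:ℂ)^(n:ℕ) := zpow_natCast _ _
      push_cast [h1, h2]
      ring
    · norm_num
  have hrange : ∀ x ∉ Set.range oddNat,
      (K:ℂ)/((y:ℂ)^2+(x:ℂ)^2) * (2 - 2*(-1:ℂ)^(x:ℕ)) = 0 := by
    intro x hx
    have hev : Even x := by
      by_contra hodd
      rw [Nat.not_even_iff_odd] at hodd
      obtain ⟨k, hk⟩ := hodd
      exact hx ⟨⟨k+1, by omega⟩, by show 2*(k+1) - 1 = x; omega⟩
    rw [hev.neg_one_pow]; ring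
  have E := (oddNat_inj.hasSum_iff hrange).mpr D'
  have hterm : ∀ m : ℕ+,
      ((fun n : ℕ => (K:ℂ)/((y:ℂ)^2+(n:ℂ)^2) * (2 - 2*(-1:ℂ)^(n:ℕ))) ∘ oddNat) m
      = ((4*K * (1/((2*(m:ℝ)-1)^2 + y^2)) : ℝ) : ℂ) := by
    intro m
    simp only [Function.comp_apply]
    rw [(odd_oddNat m).neg_one_pow]
    have hx : ((oddNat m : ℕ):ℂ) = 2*(m:ℂ) - 1 := by
      rw [show ((oddNat m : ℕ):ℂ) = (((oddNat m : ℕ):ℝ):ℂ) by push_cast; rfl, oddNat_cast]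
      push_cast; ring
    rw [hx]
    push_cast
    ring
  have E' : HasSum (fun m : ℕ+ => ((4*K * (1/((2*(m:ℝ)-1)^2 + y^2)) : ℝ):ℂ))
      (((Real.cosh (π*y) - 1 : ℝ)):ℂ) := by
    rw [← funext hterm, Complex.ofReal_sub, Complex.ofReal_one]
    exact E
  have R := Complex.hasSum_ofReal.mp E'
  have hK0 : (0:ℝ) < K := by
    rw [hK]
    have hsp := Real.sinh_pos_iff.mpr (show (0:ℝ) < π*y by positivity)
    positivity
  have hfinal : HasSum (fun m : ℕ+ => 1/((2*(m:ℝ)-1)^2 + y^2))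
      ((Real.cosh (π*y) - 1)/(4*K)) := by
    have hfun : (fun m : ℕ+ => 1/((2*(m:ℝ)-1)^2 + y^2))
        = fun m : ℕ+ => (4*K * (1/((2*(m:ℝ)-1)^2 + y^2))) / (4*K) := by
      funext m
      have h4 : (4*K) ≠ 0 := by positivity
      field_simp
    rw [hfun]
    exact R.div_const _
  rw [hfinal.tsum_eq, hK, Real.tanh_eq_sinh_div_cosh]
  have hc : Real.cosh (π*y/2) ≠ 0 := (Real.cosh_pos _).ne'
  rw [show π*y = 2*(π*y/2) by ring, Real.cosh_two_mul, Real.sinh_two_mul, Real.cosh_sq]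
  have hπ : (π:ℝ) ≠ 0 := Real.pi_ne_zero
  field_simp
  ring
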